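/- The following are equivalent for a pointed category C with binary products: (i) for every morphism f : X × X → Y and all morphisms x, x' : S → X and y : S → X, if f ∘ ⟨x,0⟩ = f ∘ ⟨x',0⟩ then f ∘ ⟨x,y⟩ = f ∘ ⟨x',y⟩; (ii) for every morphism f : X × Y → Z and all morphisms x, x' : S → X and y : S → Y, if f ∘ ⟨x,0⟩ = f ∘ ⟨x',0⟩ then f ∘ ⟨x,y⟩ = f ∘ ⟨x',y⟩; (iii) for every morphism f : X × Y → Z and all morphisms x, x' : S → X and y, y' : S → Y, if f ∘ ⟨x,0⟩ = f ∘ ⟨x',0⟩ and f ∘ ⟨0,y⟩ = f ∘ ⟨0,y'⟩ then f ∘ ⟨x,y⟩ = f ∘ ⟨x',y'⟩. -/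

import Mathlib

open CategoryTheory CategoryTheory.Limits

universe v u

/-- A pointed category with binary products is *centralic* if for every
`f : X ⨯ Y ⟶ Z` and generalized elements `x x' : S ⟶ X`, `y : S ⟶ Y`,
`f ∘ ⟨x,0⟩ = f ∘ ⟨x',0⟩` implies `f ∘ ⟨x,y⟩ = f ∘ ⟨x',y⟩`. -/
def Centralic (C : Type u) [Category.{v} C] [HasZeroObject C] [HasZeroMorphisms C]
    [HasBinaryProducts C] : Prop :=
  ∀ ⦃X Y Z S : C⦄ (f : X ⨯ Y ⟶ Z) (x x' : S ⟶ X) (y : S ⟶ Y),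
    prod.lift x 0 ≫ f = prod.lift x' 0 ≫ f →
    prod.lift x y ≫ f = prod.lift x' y ≫ f

theorem stmt0 (C : Type u) [Category.{v} C] [HasZeroObject C] [HasZeroMorphisms C]
    [HasBinaryProducts C] :
    List.TFAE
      [ -- (i)
        (∀ ⦃X Y S : C⦄ (f : X ⨯ X ⟶ Y) (x x' y : S ⟶ X),
          prod.lift x 0 ≫ f = prod.lift x' 0 ≫ f →
          prod.lift x y ≫ f = prod.lift x' y ≫ f),
        -- (ii)
        Centralic C,
        -- (iii)
        (∀ ⦃X Y Z S : C⦄ (f : X ⨯ Y ⟶ Z) (x x' : S ⟶ X) (y y' : S ⟶ Y),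
          prod.lift x 0 ≫ f = prod.lift x' 0 ≫ f →
          prod.lift 0 y ≫ f = prod.lift 0 y' ≫ f →
          prod.lift x y ≫ f = prod.lift x' y' ≫ f) ] := by
  tfae_have 1 → 2 := by
    intro h X Y Z S f x x' y hxy
    have key : ∀ (a b : S ⟶ X ⨯ Y),
        prod.lift a b ≫ (prod.lift (prod.fst ≫ prod.fst) (prod.snd ≫ prod.snd) ≫ f)
          = prod.lift (a ≫ prod.fst) (b ≫ prod.snd) ≫ f := by
      intro a b
      rw [← Category.assoc, prod.comp_lift]
      simp [prod.lift_fst, prod.lift_snd, prod.lift_fst_assoc, prod.lift_snd_assoc]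
    have := h (prod.lift (prod.fst ≫ prod.fst) (prod.snd ≫ prod.snd) ≫ f)
      (prod.lift x 0) (prod.lift x' 0) (prod.lift 0 y) ?_
    · rw [key, key] at this
      simpa [prod.lift_fst, prod.lift_snd, prod.lift_fst_assoc, prod.lift_snd_assoc] using this
    · rw [key, key]
      simpa [prod.lift_fst, prod.lift_snd, prod.lift_fst_assoc, prod.lift_snd_assoc] using hxy
  tfae_have 2 → 3 := by
    intro h X Y Z S f x x' y y' hx hy
    have h1 : prod.lift x y ≫ f = prod.lift x' y ≫ f := h f x x' y hx
    have h2 : prod.lift y x' ≫ ((prod.braiding Y X).hom ≫ f)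
        = prod.lift y' x' ≫ ((prod.braiding Y X).hom ≫ f) := by
      apply h ((prod.braiding Y X).hom ≫ f) y y' x'
      rw [← Category.assoc, ← Category.assoc]
      simpa [prod.lift_fst, prod.lift_snd, prod.lift_fst_assoc, prod.lift_snd_assoc] using hy
    rw [← Category.assoc, ← Category.assoc] at h2
    simp only [prod.lift_map_assoc, prod.braiding_hom] at h2
    rw [h1]
    simpa [prod.lift_fst, prod.lift_snd, prod.lift_fst_assoc, prod.lift_snd_assoc] using h2
  tfae_have 3 → 1 := by
    intro h X Y S f x x' y hxy
    exact h f x x' y y hxy rfl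
  tfae_finish
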